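/- Let U : ℝⁿ → ℝ be convex, let w_h : K → ℝⁿ be a function with cell average w̄_h satisfying U(w̄_h) < 0, and let U_h^max := sup_{x∈K} U(w_h(x)) with U_h^max > 0. Define θ₁ = U(w̄_h)/(U(w̄_h) - U_h^max) ∈ (0,1), θ = min{1, θ₁}, and w̃_h(x) = θ·w_h(x) + (1-θ)·w̄_h. Then: (i) the average of w̃_h over K equals w̄_h, and (ii) U(w̃_h(x)) ≤ 0 for all x ∈ K. -/

import Mathlib

open MeasureTheory

/-- the IRP limiter `w̃ = θ w_h + (1-θ) w̄_h` with
`θ = min{1, U(w̄)/(U(w̄) - U_max)}` preserves the cell average and satisfies `U(w̃) ≤ 0`. -/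
theorem IRP_limiter {n d : ℕ}
    (U : (Fin n → ℝ) → ℝ) (hU : ConvexOn ℝ Set.univ U)
    (K : Set (Fin d → ℝ)) (hK : MeasurableSet K)
    (hKfin : volume K ≠ ⊤) (hKpos : 0 < volume K)
    (wh : (Fin d → ℝ) → Fin n → ℝ) (hint : IntegrableOn wh K)
    (wbar : Fin n → ℝ)
    (hwbar : wbar = (volume K).toReal⁻¹ • ∫ x in K, wh x)
    (Umax : ℝ) (hUmax : ∀ x ∈ K, U (wh x) ≤ Umax) (hUmaxpos : 0 < Umax)
    (hUbar : U wbar < 0)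
    (θ : ℝ) (hθ : θ = min 1 (U wbar / (U wbar - Umax))) :
    U wbar / (U wbar - Umax) ∈ Set.Ioo (0 : ℝ) 1
    ∧ (volume K).toReal⁻¹ • (∫ x in K, (θ • wh x + (1 - θ) • wbar)) = wbar
    ∧ ∀ x ∈ K, U (θ • wh x + (1 - θ) • wbar) ≤ 0 := by
  have hden : U wbar - Umax < 0 := by linarith
  have hden' : U wbar - Umax ≠ 0 := ne_of_lt hden
  have hθ1pos : 0 < U wbar / (U wbar - Umax) := div_pos_of_neg_of_neg hUbar hden
  have hθ1lt : U wbar / (U wbar - Umax) < 1 := by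
    rw [div_lt_one_of_neg hden]; linarith
  have hθeq : θ = U wbar / (U wbar - Umax) := by
    rw [hθ, min_eq_right hθ1lt.le]
  have hvol : (volume K).toReal ≠ 0 := by
    have := (ENNReal.toReal_pos (ne_of_gt hKpos) hKfin)
    exact ne_of_gt this
  refine ⟨⟨hθ1pos, hθ1lt⟩, ?_, ?_⟩
  · have h1 : (∫ x in K, (θ • wh x + (1 - θ) • wbar))
        = θ • (∫ x in K, wh x) + (1 - θ) • ((volume K).toReal • wbar) := by
      have hadd := integral_add (μ := volume.restrict K)
        (f := fun x => θ • wh x) (g := fun _ => (1 - θ) • wbar)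
        (hint.smul θ) (integrableOn_const hKfin)
      rw [hadd]
      simp [integral_smul, Measure.restrict_apply_univ]
      exact smul_comm _ _ _
    have h2 : (volume K).toReal • (volume K).toReal⁻¹ • (∫ x in K, wh x)
        = ∫ x in K, wh x := by rw [smul_smul, mul_inv_cancel₀ hvol, one_smul]
    rw [h1, hwbar, h2, smul_add, smul_smul, smul_smul]
    module
  · intro x hx
    have hθ0 : 0 ≤ θ := by rw [hθeq]; exact hθ1pos.le
    have hθ1 : 1 - θ ≥ 0 := by rw [hθeq]; linarith
    have hcvx := hU.2 (Set.mem_univ (wh x)) (Set.mem_univ wbar) hθ0 hθ1 (by ring)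
    have hle : U (θ • wh x + (1 - θ) • wbar) ≤ θ * Umax + (1 - θ) * U wbar := by
      calc U (θ • wh x + (1 - θ) • wbar) ≤ θ * U (wh x) + (1 - θ) * U wbar := hcvx
        _ ≤ θ * Umax + (1 - θ) * U wbar := by
            have := hUmax x hx; nlinarith
    have : θ * Umax + (1 - θ) * U wbar = 0 := by
      rw [hθeq]; field_simp; ring
    linarith
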